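/- Let q, N, n be nonnegative integers. Then for all x ∈ [0,1], |R_{N,n}(x)| ≤ C(n+N+q, n), where C(a,b) denotes the binomial coefficient. -/

import Mathlib

open Finset

/-- The radial Zernike polynomial `R_{N,n}` in dimension `p + 2` with `p = 2q`. -/
noncomputable def zernikeR (q N n : ℕ) (x : ℝ) : ℝ :=
  x ^ N * ∑ k ∈ Finset.range (n + 1),
    (-1 : ℝ) ^ k * (Nat.choose (n + N + q) k : ℝ) * (Nat.choose n k : ℝ) *
      x ^ (2 * (n - k)) * (1 - x ^ 2) ^ k

/-- coefficient `a_j = C(n,j) * C(n+b+j, j)` of the shifted Jacobi polynomial. -/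
noncomputable def Zc (n b j : ℕ) : ℝ := (n.choose j : ℝ) * ((n + b + j).choose j : ℝ)

noncomputable def ZQ (n b : ℕ) (u : ℝ) : ℝ := ∑ j ∈ range (n+1), Zc n b j * u ^ j
noncomputable def ZQ1 (n b : ℕ) (u : ℝ) : ℝ :=
  ∑ j ∈ range (n+1), Zc n b j * ((j : ℝ) * u ^ (j-1))
noncomputable def ZQ2 (n b : ℕ) (u : ℝ) : ℝ :=
  ∑ j ∈ range (n+1), Zc n b j * ((j : ℝ) * ((j : ℝ) - 1) * u ^ (j-2))

lemma Zc_succ (n b j : ℕ) :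
    ((j : ℝ)+1)^2 * Zc n b (j+1) = ((n : ℝ) - j) * ((n : ℝ) + b + j + 1) * Zc n b j := by
  rcases le_or_gt (j+1) n with h | h
  · have h1 : (n.choose (j+1)) * (j+1) = n.choose j * (n - j) := Nat.choose_succ_right_eq n j
    have h2 : (n + b + j + 1) * (n + b + j).choose j = (n + b + j + 1).choose (j+1) * (j+1) :=
      Nat.add_one_mul_choose_eq (n + b + j) j
    have hjn : (j : ℝ) ≤ (n : ℝ) := by exact_mod_cast (Nat.le_of_succ_le h)
    have hc : ((n - j : ℕ) : ℝ) = (n : ℝ) - j := by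
      push_cast [Nat.cast_sub (Nat.le_of_succ_le h)]; ring
    have h1' : ((n.choose (j+1) : ℝ)) * ((j:ℝ)+1) = (n.choose j : ℝ) * ((n:ℝ) - j) := by
      rw [← hc]; exact_mod_cast congrArg (Nat.cast (R := ℝ)) h1
    have h2' : ((n:ℝ) + b + j + 1) * ((n + b + j).choose j : ℝ)
        = ((n + b + j + 1).choose (j+1) : ℝ) * ((j:ℝ)+1) := by
      exact_mod_cast congrArg (Nat.cast (R := ℝ)) h2
    unfold Zc
    have : n + b + (j+1) = n + b + j + 1 := by ring
    rw [this]
    linear_combination (((j:ℝ)+1) * ((n + b + j + 1).choose (j+1) : ℝ)) * h1'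
      - ((n.choose j : ℝ) * ((n:ℝ) - j)) * h2'
  · unfold Zc
    rw [Nat.choose_eq_zero_of_lt h]
    rcases eq_or_lt_of_le (Nat.lt_succ_iff.mp h) with he | hlt
    · subst he; simp
    · rw [Nat.choose_eq_zero_of_lt hlt]; simp


lemma hasDerivAt_ZQ (n b : ℕ) (u : ℝ) : HasDerivAt (ZQ n b) (ZQ1 n b u) u := by
  unfold ZQ ZQ1
  apply HasDerivAt.fun_sum
  intro j _
  exact (hasDerivAt_pow j u).const_mul (Zc n b j)

lemma hasDerivAt_ZQ1 (n b : ℕ) (u : ℝ) : HasDerivAt (ZQ1 n b) (ZQ2 n b u) u := by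
  unfold ZQ1 ZQ2
  apply HasDerivAt.fun_sum
  intro j _
  match j with
  | 0 => simpa using hasDerivAt_const u (0:ℝ)
  | (i+1) =>
    have h := (hasDerivAt_pow i u).const_mul (Zc n b (i+1) * ((i:ℝ)+1))
    have e1 : (fun u : ℝ => Zc n b (i+1) * ((((i:ℕ)+1 : ℕ)) * u ^ ((i+1)-1)))
        = fun u : ℝ => Zc n b (i+1) * ((i:ℝ)+1) * u ^ i := by
      funext v; push_cast [Nat.add_sub_cancel]; ring
    rw [e1]
    refine h.congr_deriv ?_
    push_cast [Nat.add_sub_cancel, show (i+1)-2 = i-1 by omega]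
    ring

lemma ZQ_ode (n b : ℕ) (u : ℝ) :
    u * (u+1) * ZQ2 n b u + (1 + ((b:ℝ)+2) * u) * ZQ1 n b u
      = ((n:ℝ) * ((n:ℝ) + (b:ℝ) + 1)) * ZQ n b u := by
  unfold ZQ ZQ1 ZQ2
  rw [mul_sum, mul_sum, mul_sum, ← sum_add_distrib]
  have step1 : ∀ j ∈ range (n+1),
      u * (u+1) * (Zc n b j * ((j : ℝ) * ((j : ℝ) - 1) * u ^ (j-2)))
        + (1 + ((b:ℝ)+2) * u) * (Zc n b j * ((j : ℝ) * u ^ (j-1)))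
      = Zc n b j * (((j:ℝ) * ((j:ℝ)-1) + ((b:ℝ)+2) * j) * u ^ j)
        + Zc n b j * ((j:ℝ)^2 * u ^ (j-1)) := by
    intro j _
    match j with
    | 0 => push_cast; ring
    | 1 => push_cast; ring
    | (i+2) =>
      push_cast [show (i+2)-2 = i by omega, show (i+2)-1 = i+1 by omega]
      ring
  rw [sum_congr rfl step1, sum_add_distrib]
  have step2 : ∑ j ∈ range (n+1), Zc n b j * ((j:ℝ)^2 * u ^ (j-1))
      = ∑ j ∈ range (n+1), Zc n b (j+1) * (((j:ℝ)+1)^2 * u ^ j) := by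
    rw [Finset.sum_range_succ' (fun j => Zc n b j * ((j:ℝ)^2 * u ^ (j-1)))]
    rw [Finset.sum_range_succ (fun j => Zc n b (j+1) * (((j:ℝ)+1)^2 * u ^ j))]
    have hz : Zc n b (n+1) = 0 := by
      unfold Zc; rw [Nat.choose_eq_zero_of_lt (Nat.lt_succ_self n)]; ring
    rw [hz]
    simp only [Nat.cast_zero, Nat.cast_add, Nat.cast_one, Nat.add_sub_cancel]
    ring
  rw [step2, ← sum_add_distrib]
  apply sum_congr rfl
  intro j _
  have key := Zc_succ n b j
  have expand : ((j:ℝ) * ((j:ℝ)-1) + ((b:ℝ)+2) * j) + ((n:ℝ) - j) * ((n:ℝ) + b + j + 1)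
      = (n:ℝ) * ((n:ℝ) + b + 1) := by ring
  linear_combination (u ^ j) * key + (Zc n b j * u ^ j) * expand

lemma nat_key (n m j : ℕ) (hj : j ≤ n) :
    ∑ k ∈ range (j+1), m.choose k * (n.choose k * (n-k).choose (j-k))
      = n.choose j * (m+j).choose j := by
  have h1 : ∀ k ∈ range (j+1),
      m.choose k * (n.choose k * (n-k).choose (j-k)) = m.choose k * (n.choose j * j.choose k) := by
    intro k hk
    rw [← Nat.choose_mul (Nat.lt_succ_iff.mp (mem_range.mp hk))]
  rw [sum_congr rfl h1]
  have h2 : ∑ k ∈ range (j+1), m.choose k * (n.choose j * j.choose k)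
      = n.choose j * ∑ k ∈ range (j+1), m.choose k * j.choose k := by
    rw [mul_sum]; apply sum_congr rfl; intro k _; ring
  rw [h2]
  congr 1
  have h3 := Nat.add_choose_eq m j j
  rw [Finset.Nat.sum_antidiagonal_eq_sum_range_succ_mk] at h3
  rw [h3]
  apply sum_congr rfl
  intro k hk
  rw [Nat.choose_symm (Nat.lt_succ_iff.mp (mem_range.mp hk))]

lemma ZA (n b : ℕ) (u : ℝ) :
    ∑ k ∈ range (n+1), ((n+b).choose k : ℝ) * (n.choose k : ℝ) * u^k * (1+u)^(n-k)
      = ZQ n b u := by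
  have hbin : ∀ k ∈ range (n+1),
      ((n+b).choose k : ℝ) * (n.choose k : ℝ) * u^k * (1+u)^(n-k)
      = ∑ i ∈ range (n-k+1),
          ((n+b).choose k : ℝ) * (n.choose k : ℝ) * ((n-k).choose i : ℝ) * u^(k+i) := by
    intro k _
    rw [add_comm (1:ℝ) u, add_pow]
    rw [mul_sum]
    apply sum_congr rfl
    intro i _
    rw [pow_add]
    push_cast
    ring
  rw [sum_congr rfl hbin]
  rw [Finset.sum_sigma']
  rw [Finset.sum_nbij' (i := fun x : Σ _ : ℕ, ℕ => (⟨x.1 + x.2, x.1⟩ : Σ _ : ℕ, ℕ))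
    (j := fun y : Σ _ : ℕ, ℕ => (⟨y.2, y.1 - y.2⟩ : Σ _ : ℕ, ℕ))
    (t := (range (n+1)).sigma (fun j => range (j+1)))
    (g := fun y : Σ _ : ℕ, ℕ =>
      ((n+b).choose y.2 : ℝ) * (n.choose y.2 : ℝ) * ((n-y.2).choose (y.1-y.2) : ℝ) * u^(y.2+(y.1-y.2)))]
  · rw [Finset.sum_sigma]
    unfold ZQ
    apply sum_congr rfl
    intro j hj
    have hjn : j ≤ n := Nat.lt_succ_iff.mp (mem_range.mp hj)
    have h1 : ∀ k ∈ range (j+1),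
        ((n+b).choose k : ℝ) * (n.choose k : ℝ) * ((n-k).choose (j-k) : ℝ) * u^(k+(j-k))
        = (((n+b).choose k * (n.choose k * (n-k).choose (j-k)) : ℕ) : ℝ) * u^j := by
      intro k hk
      have hkj : k ≤ j := Nat.lt_succ_iff.mp (mem_range.mp hk)
      rw [show k + (j-k) = j by omega]
      push_cast
      ring
    rw [sum_congr rfl h1, ← sum_mul, ← Nat.cast_sum, nat_key n (n+b) j hjn]
    unfold Zc
    push_cast
    ring
  · rintro ⟨k, i⟩ h
    simp only [Finset.mem_sigma, mem_range] at h ⊢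
    omega
  · rintro ⟨j, k⟩ h
    simp only [Finset.mem_sigma, mem_range] at h ⊢
    omega
  · rintro ⟨k, i⟩ h
    simp only [Finset.mem_sigma, mem_range] at h
    simp only [Sigma.mk.inj_iff, heq_eq_eq]
    exact ⟨trivial, by omega⟩
  · rintro ⟨j, k⟩ h
    simp only [Finset.mem_sigma, mem_range] at h
    simp only [Sigma.mk.inj_iff, heq_eq_eq]
    exact ⟨by omega, trivial⟩
  · rintro ⟨k, i⟩ h
    simp only [Finset.mem_sigma, mem_range] at h
    simp only [Nat.add_sub_cancel_left]

lemma ZQ_zero (n b : ℕ) : ZQ n b 0 = 1 := by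
  unfold ZQ
  rw [Finset.sum_eq_single_of_mem 0 (mem_range.mpr (Nat.succ_pos n))]
  · unfold Zc; simp
  · intro j _ hj
    rw [zero_pow hj, mul_zero]

lemma ZQ_neg_one (n b : ℕ) : ZQ n b (-1) = (-1)^n * ((n+b).choose n : ℝ) := by
  rw [← ZA n b (-1)]
  rw [Finset.sum_eq_single_of_mem n (mem_range.mpr (Nat.lt_succ_self n))]
  · simp [mul_comm]
  · intro k hk hkn
    have : n - k ≠ 0 := by
      have := mem_range.mp hk; omega
    rw [show (1:ℝ) + (-1) = 0 by ring, zero_pow this, mul_zero]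

lemma ZQ_bound (n b : ℕ) (hn : 0 < n) {u : ℝ} (hu1 : -1 ≤ u) (hu0 : u ≤ 0) :
    |ZQ n b u| ≤ ((n+b).choose n : ℝ) := by
  set C : ℝ := ((n+b).choose n : ℝ) with hCdef
  have hC1 : (1:ℝ) ≤ C := by
    have h : 1 ≤ (n+b).choose n := Nat.choose_pos (Nat.le_add_right n b)
    rw [hCdef]
    exact_mod_cast h
  set lam : ℝ := (n:ℝ) * ((n:ℝ) + (b:ℝ) + 1) with hlamdef
  have hlam : 0 < lam := by
    have h1 : (1:ℝ) ≤ (n:ℝ) := by exact_mod_cast hn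
    have h2 : (0:ℝ) ≤ (b:ℝ) := Nat.cast_nonneg b
    nlinarith
  set g : ℝ → ℝ := fun v => lam * (ZQ n b v)^2 + (-v)*(1+v)*(ZQ1 n b v)^2 with hgdef
  have hg : ∀ v, HasDerivAt g ((ZQ1 n b v)^2 * (1 + (2*(b:ℝ)+2)*v)) v := by
    intro v
    have h1 := hasDerivAt_ZQ n b v
    have h2 := hasDerivAt_ZQ1 n b v
    have hA : HasDerivAt (fun w => (ZQ n b w)^2) (2 * ZQ n b v * ZQ1 n b v) v := by
      have := h1.fun_pow 2
      simpa [mul_comm, mul_assoc] using this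
    have hB : HasDerivAt (fun w => (ZQ1 n b w)^2) (2 * ZQ1 n b v * ZQ2 n b v) v := by
      have := h2.fun_pow 2
      simpa [mul_comm, mul_assoc] using this
    have hC' : HasDerivAt (fun w : ℝ => (-w)*(1+w)) ((-1)*(1+v) + (-v)*1) v := by
      have := ((hasDerivAt_id v).fun_neg).fun_mul ((hasDerivAt_const v (1:ℝ)).fun_add (hasDerivAt_id v))
      exact this.congr_deriv (by simp [id])
    have hp := (hA.const_mul lam).fun_add (hC'.fun_mul hB)
    have heq : lam * (2 * ZQ n b v * ZQ1 n b v)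
        + ((-1)*(1+v) + (-v)*1) * (ZQ1 n b v)^2 + (-v)*(1+v) * (2 * ZQ1 n b v * ZQ2 n b v)
        = (ZQ1 n b v)^2 * (1 + (2*(b:ℝ)+2)*v) := by
      have ode := ZQ_ode n b v
      linear_combination (-(2 * ZQ1 n b v)) * ode
    rw [← heq]
    refine hp.congr_deriv ?_
    ring
  have hdiff : Differentiable ℝ g := fun v => (hg v).differentiableAt
  set u0 : ℝ := -(1/(2*(b:ℝ)+2)) with hu0def
  have hbpos : (0:ℝ) < 2*(b:ℝ)+2 := by positivity
  have hu0a : -1 ≤ u0 := by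
    rw [hu0def]
    rw [neg_le, neg_neg]
    rw [div_le_one hbpos]
    have : (0:ℝ) ≤ (b:ℝ) := Nat.cast_nonneg b
    linarith
  have hu0b : u0 ≤ 0 := by
    rw [hu0def]
    have : (0:ℝ) ≤ 1/(2*(b:ℝ)+2) := by positivity
    linarith
  have anti : AntitoneOn g (Set.Icc (-1) u0) := by
    apply antitoneOn_of_deriv_nonpos (convex_Icc _ _) hdiff.continuous.continuousOn
      (hdiff.differentiableOn)
    intro v hv
    rw [interior_Icc] at hv
    rw [(hg v).deriv]
    have hv2 : v ≤ u0 := le_of_lt hv.2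
    have h1 : 1 + (2*(b:ℝ)+2)*v ≤ 0 := by
      have : (2*(b:ℝ)+2)*v ≤ (2*(b:ℝ)+2)*u0 := by
        exact mul_le_mul_of_nonneg_left hv2 (le_of_lt hbpos)
      have h2 : (2*(b:ℝ)+2)*u0 = -1 := by
        rw [hu0def]
        field_simp
      linarith
    nlinarith [sq_nonneg (ZQ1 n b v)]
  have mono : MonotoneOn g (Set.Icc u0 0) := by
    apply monotoneOn_of_deriv_nonneg (convex_Icc _ _) hdiff.continuous.continuousOn
      (hdiff.differentiableOn)
    intro v hv
    rw [interior_Icc] at hv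
    rw [(hg v).deriv]
    have hv1 : u0 ≤ v := le_of_lt hv.1
    have h1 : 0 ≤ 1 + (2*(b:ℝ)+2)*v := by
      have : (2*(b:ℝ)+2)*u0 ≤ (2*(b:ℝ)+2)*v := by
        exact mul_le_mul_of_nonneg_left hv1 (le_of_lt hbpos)
      have h2 : (2*(b:ℝ)+2)*u0 = -1 := by
        rw [hu0def]
        field_simp
      linarith
    nlinarith [sq_nonneg (ZQ1 n b v)]
  have hg0 : g 0 = lam := by
    rw [hgdef]
    simp [ZQ_zero]
  have hgm1 : g (-1) = lam * C^2 := by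
    rw [hgdef]
    simp only [ZQ_neg_one]
    rw [← hCdef]
    have : ((-1:ℝ)^n * C)^2 = C^2 := by
      rw [mul_pow, ← pow_mul, mul_comm n 2, pow_mul]
      norm_num
    rw [this]
    ring
  have hub : g u ≤ lam * C^2 := by
    rcases le_total u u0 with h | h
    · have := anti (Set.mem_Icc.mpr ⟨le_refl (-1), hu0a⟩) (Set.mem_Icc.mpr ⟨hu1, h⟩) hu1
      rw [hgm1] at this
      exact this
    · have := mono (Set.mem_Icc.mpr ⟨h, hu0⟩) (Set.mem_Icc.mpr ⟨hu0b, le_refl 0⟩) hu0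
      rw [hg0] at this
      have h1 : (0:ℝ) ≤ lam * ((C-1)*(C+1)) :=
        mul_nonneg hlam.le (mul_nonneg (by linarith) (by linarith))
      have hCC : lam ≤ lam * C^2 := by nlinarith [h1]
      linarith
  have hlow : lam * (ZQ n b u)^2 ≤ g u := by
    simp only [hgdef]
    have h1 : 0 ≤ (-u)*(1+u)*(ZQ1 n b u)^2 := by
      have : 0 ≤ (-u)*(1+u) := by nlinarith
      positivity
    linarith
  have hsq : (ZQ n b u)^2 ≤ C^2 := by
    have := le_trans hlow hub
    exact le_of_mul_le_mul_left (by linarith) hlam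
  nlinarith [abs_nonneg (ZQ n b u), sq_abs (ZQ n b u)]

theorem zernike_radial_bound' (q N n : ℕ) (x : ℝ) (hx : x ∈ Set.Icc (0:ℝ) 1) :
    |(x : ℝ) ^ N * ∑ k ∈ Finset.range (n + 1),
      (-1 : ℝ) ^ k * (Nat.choose (n + N + q) k : ℝ) * (Nat.choose n k : ℝ) *
        x ^ (2 * (n - k)) * (1 - x ^ 2) ^ k| ≤ (Nat.choose (n + N + q) n : ℝ) := by
  obtain ⟨hx0, hx1⟩ := hx
  have hxN : |x ^ N| ≤ 1 := by
    rw [abs_of_nonneg (pow_nonneg hx0 N)]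
    exact pow_le_one₀ hx0 hx1
  rcases Nat.eq_zero_or_pos n with hn | hn
  · subst hn
    rw [Finset.sum_range_one]
    norm_num
    rw [← abs_pow]
    exact hxN
  · have key : (∑ k ∈ Finset.range (n + 1),
        (-1 : ℝ) ^ k * (Nat.choose (n + N + q) k : ℝ) * (Nat.choose n k : ℝ) *
          x ^ (2 * (n - k)) * (1 - x ^ 2) ^ k) = ZQ n (N+q) (x^2-1) := by
      rw [← ZA n (N+q) (x^2-1)]
      apply sum_congr rfl
      intro k _
      rw [show (1:ℝ) + (x^2-1) = x^2 by ring]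
      rw [show n + (N+q) = n + N + q by ring]
      rw [show ((x^2-1):ℝ)^k = (-1)^k * (1-x^2)^k by rw [show x^2-1 = (-1)*(1-x^2) by ring, mul_pow]]
      rw [show ((x^2):ℝ)^(n-k) = x^(2*(n-k)) by rw [← pow_mul]]
      have h4 : ((-1:ℝ))^k * ((-1:ℝ))^k = 1 := by
        rw [← mul_pow]; norm_num
      nlinarith [h4]
    rw [key, abs_mul]
    have hu1 : (-1:ℝ) ≤ x^2 - 1 := by nlinarith
    have hu0 : x^2 - 1 ≤ 0 := by nlinarith
    have hb := ZQ_bound n (N+q) hn hu1 hu0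
    have hrw : n + (N+q) = n + N + q := by ring
    rw [hrw] at hb
    calc |x ^ N| * |ZQ n (N+q) (x^2-1)| ≤ 1 * ((n+N+q).choose n : ℝ) := by
          apply mul_le_mul hxN hb (abs_nonneg _) zero_le_one
      _ = ((n+N+q).choose n : ℝ) := one_mul _

theorem zernike_radial_bound (q N n : ℕ) (x : ℝ) (hx : x ∈ Set.Icc (0:ℝ) 1) :
    |zernikeR q N n x| ≤ (Nat.choose (n + N + q) n : ℝ) := by
  unfold zernikeR
  exact zernike_radial_bound' q N n x hx
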